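/- Assume φ:[0,∞)→[0,∞) is measurable with Λ = ∫₀^∞ φ(s) ds ∈ (1,∞], φ has locally finite variation and its total variation on [0,t] is at most C(1+t)^p for some constants C,p>0 and all t≥0; set Γ(t)=∑_{n≥1} φ^{⋆n}(t) (which is locally bounded). Then for any pair of measurable locally bounded functions u,h:(0,∞)→ℝ satisfying u_t = h_t + ∫₀ᵗ φ(t−s) u_s ds for all t>0, one has u_t = h_t + ∫₀ᵗ Γ(t−s) h_s ds for all t>0. -/

import Mathlib

open MeasureTheory Set Filter Topology intervalIntegral

/-- Convolution powers: `convPow φ n = φ^{⋆(n+1)}`, where `φ^{⋆1} = φ` and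
`φ^{⋆(n+1)} = φ^{⋆n} ⋆ φ` with `(f ⋆ g) t = ∫₀ᵗ f s * g (t - s) ds`. -/
noncomputable def convPow (φ : ℝ → ℝ) : ℕ → ℝ → ℝ
  | 0 => φ
  | n + 1 => fun t => ∫ s in (0:ℝ)..t, convPow φ n s * φ (t - s)

lemma convPow_measurable (φ : ℝ → ℝ) (hφ : Measurable φ) : ∀ n, Measurable (convPow φ n) := by
  intro n
  induction n with
  | zero => exact hφ
  | succ n ih =>
    have hmK : Measurable (fun p : ℝ × ℝ => convPow φ n p.2 * φ (p.1 - p.2)) :=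
      (ih.comp measurable_snd).mul (hφ.comp (measurable_fst.sub measurable_snd))
    have hs1 : MeasurableSet {p : ℝ × ℝ | 0 < p.2 ∧ p.2 ≤ p.1} :=
      (measurableSet_lt measurable_const measurable_snd).inter
        (measurableSet_le measurable_snd measurable_fst)
    have hs2 : MeasurableSet {p : ℝ × ℝ | p.1 < p.2 ∧ p.2 ≤ 0} :=
      (measurableSet_lt measurable_fst measurable_snd).inter
        (measurableSet_le measurable_snd measurable_const)
    set F1 : ℝ × ℝ → ℝ :=
      {p : ℝ × ℝ | 0 < p.2 ∧ p.2 ≤ p.1}.indicator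
        (fun p => convPow φ n p.2 * φ (p.1 - p.2)) with hF1
    set F2 : ℝ × ℝ → ℝ :=
      {p : ℝ × ℝ | p.1 < p.2 ∧ p.2 ≤ 0}.indicator
        (fun p => convPow φ n p.2 * φ (p.1 - p.2)) with hF2
    have key : ∀ t : ℝ, convPow φ (n+1) t = (∫ s, F1 (t, s)) - (∫ s, F2 (t, s)) := by
      intro t
      have e1 : ∀ s : ℝ, F1 (t, s) =
          (Ioc (0:ℝ) t).indicator (fun s => convPow φ n s * φ (t - s)) s := by
        intro s
        by_cases hs : s ∈ Ioc (0:ℝ) t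
        · rw [indicator_of_mem hs]
          exact indicator_of_mem (by exact ⟨hs.1, hs.2⟩) _
        · rw [indicator_of_notMem hs]
          exact indicator_of_notMem (by simpa [mem_Ioc] using hs) _
      have e2 : ∀ s : ℝ, F2 (t, s) =
          (Ioc t (0:ℝ)).indicator (fun s => convPow φ n s * φ (t - s)) s := by
        intro s
        by_cases hs : s ∈ Ioc t (0:ℝ)
        · rw [indicator_of_mem hs]
          exact indicator_of_mem (by exact ⟨hs.1, hs.2⟩) _
        · rw [indicator_of_notMem hs]
          exact indicator_of_notMem (by simpa [mem_Ioc] using hs) _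
      show (∫ s in (0:ℝ)..t, convPow φ n s * φ (t - s)) = _
      rw [intervalIntegral]
      simp only [e1, e2]
      rw [MeasureTheory.integral_indicator measurableSet_Ioc, MeasureTheory.integral_indicator measurableSet_Ioc]
    have m1 : Measurable fun t => ∫ s, F1 (t, s) := by
      have : StronglyMeasurable F1 := (hmK.indicator hs1).stronglyMeasurable
      exact this.integral_prod_right'.measurable
    have m2 : Measurable fun t => ∫ s, F2 (t, s) := by
      have : StronglyMeasurable F2 := (hmK.indicator hs2).stronglyMeasurable
      exact this.integral_prod_right'.measurable
    have : convPow φ (n+1) = fun t => (∫ s, F1 (t, s)) - (∫ s, F2 (t, s)) := funext key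
    rw [this]
    exact m1.sub m2

lemma convPow_bound (φ : ℝ → ℝ) {T M : ℝ} (hM : 0 ≤ M)
    (hb : ∀ s ∈ Icc (0:ℝ) T, |φ s| ≤ M) :
    ∀ n, ∀ t ∈ Icc (0:ℝ) T, |convPow φ n t| ≤ M ^ (n+1) * t ^ n / n.factorial := by
  intro n
  induction n with
  | zero => intro t ht; simpa [convPow] using hb t ht
  | succ n ih =>
    intro t ht
    obtain ⟨ht0, htT⟩ := ht
    have key : ‖∫ s in (0:ℝ)..t, convPow φ n s * φ (t - s)‖ ≤
        |∫ s in (0:ℝ)..t, (M ^ (n+1) * M / n.factorial) * s ^ n| := by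
      apply intervalIntegral.norm_integral_le_abs_of_norm_le
      · rw [Set.uIoc_of_le ht0]
        filter_upwards [ae_restrict_mem measurableSet_Ioc] with s hs
        have hs0 : (0:ℝ) ≤ s := hs.1.le
        have hsT : s ≤ T := hs.2.trans htT
        have h1 : |convPow φ n s| ≤ M ^ (n+1) * s ^ n / n.factorial :=
          ih s ⟨hs0, hsT⟩
        have h2 : |φ (t - s)| ≤ M := hb _ ⟨by linarith [hs.2], by linarith⟩
        calc ‖convPow φ n s * φ (t - s)‖ = |convPow φ n s| * |φ (t - s)| := abs_mul _ _
          _ ≤ (M ^ (n+1) * s ^ n / n.factorial) * M := by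
              apply mul_le_mul h1 h2 (abs_nonneg _)
              positivity
          _ = (M ^ (n+1) * M / n.factorial) * s ^ n := by ring
      · exact (continuous_const.mul (continuous_pow n)).intervalIntegrable 0 t
    have hval : (∫ s in (0:ℝ)..t, (M ^ (n+1) * M / n.factorial) * s ^ n) =
        M ^ (n+2) * t ^ (n+1) / (n+1).factorial := by
      rw [intervalIntegral.integral_const_mul, integral_pow]
      rw [Nat.factorial_succ]
      push_cast
      field_simp
      ring
    calc |convPow φ (n+1) t| = ‖∫ s in (0:ℝ)..t, convPow φ n s * φ (t - s)‖ := rfl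
      _ ≤ |∫ s in (0:ℝ)..t, (M ^ (n+1) * M / n.factorial) * s ^ n| := key
      _ = M ^ (n+2) * t ^ (n+1) / (n+1).factorial := by
          rw [hval, abs_of_nonneg (by positivity)]

lemma triangle_swap {t C : ℝ} (ht : 0 ≤ t) (hC : 0 ≤ C) (K : ℝ → ℝ → ℝ)
    (hK : Measurable (Function.uncurry K))
    (hb : ∀ s r : ℝ, 0 < r → r ≤ s → s ≤ t → |K s r| ≤ C) :
    (∫ s in Ioc (0:ℝ) t, ∫ r in Ioc (0:ℝ) s, K s r) =
    ∫ r in Ioc (0:ℝ) t, ∫ s in Ioc r t, K s r := by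
  set K' : ℝ → ℝ → ℝ := fun s r => if 0 < r ∧ r ≤ s then K s r else 0 with hK'
  have hsetm : MeasurableSet {p : ℝ × ℝ | 0 < p.2 ∧ p.2 ≤ p.1} :=
    (measurableSet_lt measurable_const measurable_snd).inter
      (measurableSet_le measurable_snd measurable_fst)
  have hK'meas : Measurable (Function.uncurry K') := by
    have : Function.uncurry K' = fun p : ℝ × ℝ =>
        if 0 < p.2 ∧ p.2 ≤ p.1 then Function.uncurry K p else 0 := rfl
    rw [this]
    exact Measurable.ite hsetm hK measurable_const
  have stepA : ∀ s ∈ Ioc (0:ℝ) t, (∫ r in Ioc (0:ℝ) s, K s r) = ∫ r in Ioc (0:ℝ) t, K' s r := by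
    intro s hs
    have : (fun r => K' s r) = (Ioc (0:ℝ) s).indicator (fun r => K s r) := by
      funext r
      by_cases hr : r ∈ Ioc (0:ℝ) s
      · rw [indicator_of_mem hr]; exact if_pos ⟨hr.1, hr.2⟩
      · rw [indicator_of_notMem hr]; exact if_neg (by simpa [mem_Ioc] using hr)
    rw [this, setIntegral_indicator measurableSet_Ioc,
      inter_eq_right.mpr (Ioc_subset_Ioc_right hs.2)]
  have stepC : ∀ r ∈ Ioc (0:ℝ) t, (∫ s in Ioc (0:ℝ) t, K' s r) = ∫ s in Ioc r t, K s r := by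
    intro r hr
    have : (fun s => K' s r) = (Ici r).indicator (fun s => K s r) := by
      funext s
      by_cases hsr : s ∈ Ici r
      · rw [indicator_of_mem hsr]; exact if_pos ⟨hr.1, hsr⟩
      · rw [indicator_of_notMem hsr]
        exact if_neg (by simp only [mem_Ici, not_le] at hsr; intro hc; linarith [hc.2])
    rw [this, setIntegral_indicator measurableSet_Ici]
    have hset : Ioc (0:ℝ) t ∩ Ici r = Icc r t := by
      ext s
      simp only [mem_inter_iff, mem_Ioc, mem_Ici, mem_Icc]
      constructor
      · rintro ⟨⟨_, h2⟩, h3⟩; exact ⟨h3, h2⟩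
      · rintro ⟨h1, h2⟩; exact ⟨⟨lt_of_lt_of_le hr.1 h1, h2⟩, h1⟩
    rw [hset, integral_Icc_eq_integral_Ioc]
  have hint : Integrable (Function.uncurry K')
      ((volume.restrict (Ioc (0:ℝ) t)).prod (volume.restrict (Ioc (0:ℝ) t))) := by
    have hfin : IsFiniteMeasure
        ((volume.restrict (Ioc (0:ℝ) t)).prod (volume.restrict (Ioc (0:ℝ) t))) := by
      infer_instance
    refine Integrable.mono' (integrable_const C) hK'meas.aestronglyMeasurable ?_
    rw [Measure.prod_restrict]
    filter_upwards [ae_restrict_mem (measurableSet_Ioc.prod measurableSet_Ioc)] with p hp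
    have hp1 : p.1 ∈ Ioc (0:ℝ) t := hp.1
    have hp2 : p.2 ∈ Ioc (0:ℝ) t := hp.2
    show ‖K' p.1 p.2‖ ≤ C
    rw [hK']
    by_cases hcond : 0 < p.2 ∧ p.2 ≤ p.1
    · simp only [if_pos hcond]
      exact (Real.norm_eq_abs _ ▸ hb p.1 p.2 hcond.1 hcond.2 hp1.2)
    · simp [if_neg hcond, hC]
  calc (∫ s in Ioc (0:ℝ) t, ∫ r in Ioc (0:ℝ) s, K s r)
      = ∫ s in Ioc (0:ℝ) t, ∫ r in Ioc (0:ℝ) t, K' s r :=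
        setIntegral_congr_fun measurableSet_Ioc (fun s hs => stepA s hs)
    _ = ∫ r in Ioc (0:ℝ) t, ∫ s in Ioc (0:ℝ) t, K' s r := integral_integral_swap hint
    _ = ∫ r in Ioc (0:ℝ) t, ∫ s in Ioc r t, K s r :=
        setIntegral_congr_fun measurableSet_Ioc (fun r hr => stepC r hr)

lemma conv_comm (f g : ℝ → ℝ) (t : ℝ) :
    (∫ s in (0:ℝ)..t, f (t - s) * g s) = ∫ s in (0:ℝ)..t, f s * g (t - s) := by
  have h := intervalIntegral.integral_comp_sub_left (a := (0:ℝ)) (b := t)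
    (fun x => f x * g (t - x)) t
  simp only [sub_zero, sub_self] at h
  rw [← h]
  apply intervalIntegral.integral_congr
  intro s _
  simp [sub_sub_cancel]

lemma inner_conv (φ : ℝ → ℝ) (N : ℕ) {r t : ℝ} (hrt : r ≤ t) :
    (∫ s in Ioc r t, convPow φ N (t - s) * φ (s - r)) = convPow φ (N+1) (t - r) := by
  rw [← intervalIntegral.integral_of_le hrt]
  have h := intervalIntegral.integral_comp_add_right (a := (0:ℝ)) (b := t - r)
    (fun s => convPow φ N (t - s) * φ (s - r)) r
  simp only [zero_add, sub_add_cancel] at h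
  rw [← h]
  have : (∫ x in (0:ℝ)..(t - r), convPow φ N (t - (x + r)) * φ (x + r - r)) =
      ∫ x in (0:ℝ)..(t - r), convPow φ N ((t - r) - x) * φ x := by
    apply intervalIntegral.integral_congr
    intro x _
    have e1 : t - (x + r) = t - r - x := by ring
    have e2 : x + r - r = x := by ring
    simp only []
    rw [e1, e2]
  rw [this, conv_comm]
  rfl


/-- **renewal identity.** In the supercritical setting, with
`Γ t = ∑_{n≥1} φ^{⋆n}(t)` (which is locally bounded), any pair of measurable locally bounded
functions `u, h : (0,∞) → ℝ` with `u t = h t + ∫₀ᵗ φ(t-s) u s ds` for all `t > 0` satisfies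
`u t = h t + ∫₀ᵗ Γ(t-s) h s ds` for all `t > 0`. -/
theorem stmt10 (φ : ℝ → ℝ)
    (hφmeas : Measurable φ)
    (hφ0 : ∀ t : ℝ, 0 ≤ t → 0 ≤ φ t)
    (hΛ : 1 < ∫⁻ s in Ioi (0:ℝ), ENNReal.ofReal (φ s))
    (hφvar : ∃ C : ℝ, 0 < C ∧ ∃ p : ℝ, 0 < p ∧
      ∀ t : ℝ, 0 ≤ t → eVariationOn φ (Icc 0 t) ≤ ENNReal.ofReal (C * (1 + t) ^ p))
    (u h : ℝ → ℝ)
    (humeas : Measurable u) (hhmeas : Measurable h)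
    (hulb : ∀ T : ℝ, 0 ≤ T → ∃ M : ℝ, ∀ t ∈ Ioc (0:ℝ) T, |u t| ≤ M)
    (hhlb : ∀ T : ℝ, 0 ≤ T → ∃ M : ℝ, ∀ t ∈ Ioc (0:ℝ) T, |h t| ≤ M)
    (heq : ∀ t : ℝ, 0 < t → u t = h t + ∫ s in (0:ℝ)..t, φ (t - s) * u s) :
    ∀ t : ℝ, 0 < t → u t = h t + ∫ s in (0:ℝ)..t, (∑' n, convPow φ n (t - s)) * h s := by
  intro t ht
  have cm : ∀ n, Measurable (convPow φ n) := convPow_measurable φ hφmeas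
  -- bound M for φ on [0, t]
  obtain ⟨C, hC, p, hp, hvar⟩ := hφvar
  set M : ℝ := |φ 0| + C * (1 + t) ^ p with hMdef
  have hCp : 0 ≤ C * (1 + t) ^ p := by positivity
  have hM : 0 ≤ M := by positivity
  have hbφ : ∀ s ∈ Icc (0:ℝ) t, |φ s| ≤ M := by
    intro s hs
    have h1 : edist (φ s) (φ 0) ≤ eVariationOn φ (Icc 0 t) :=
      eVariationOn.edist_le φ hs (left_mem_Icc.mpr ht.le)
    have h2 : edist (φ s) (φ 0) ≤ ENNReal.ofReal (C * (1 + t) ^ p) :=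
      h1.trans (hvar t ht.le)
    rw [edist_dist, Real.dist_eq] at h2
    have h3 : |φ s - φ 0| ≤ C * (1 + t) ^ p := by
      rwa [ENNReal.ofReal_le_ofReal_iff hCp] at h2
    calc |φ s| = |φ s - φ 0 + φ 0| := by ring_nf
      _ ≤ |φ s - φ 0| + |φ 0| := abs_add_le _ _
      _ ≤ C * (1 + t) ^ p + |φ 0| := by linarith
      _ = M := by rw [hMdef]; ring
  -- bounds for u and h
  obtain ⟨Mu0, hMu0⟩ := hulb t ht.le
  obtain ⟨Mh0, hMh0⟩ := hhlb t ht.le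
  set Mu : ℝ := max Mu0 0 with hMudef
  set Mh : ℝ := max Mh0 0 with hMhdef
  have hMu : 0 ≤ Mu := le_max_right _ _
  have hMh : 0 ≤ Mh := le_max_right _ _
  have hbu : ∀ s ∈ Ioc (0:ℝ) t, |u s| ≤ Mu := fun s hs => (hMu0 s hs).trans (le_max_left _ _)
  have hbh : ∀ s ∈ Ioc (0:ℝ) t, |h s| ≤ Mh := fun s hs => (hMh0 s hs).trans (le_max_left _ _)
  -- bound for convPow
  set D : ℕ → ℝ := fun n => M ^ (n+1) * t ^ n / n.factorial with hDdef
  have hD0 : ∀ n, 0 ≤ D n := by intro n; rw [hDdef]; positivity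
  have hD : ∀ n, ∀ τ ∈ Icc (0:ℝ) t, |convPow φ n τ| ≤ D n := by
    intro n τ hτ
    refine (convPow_bound φ hM hbφ n τ hτ).trans ?_
    have hred : D n = M ^ (n+1) * t ^ n / n.factorial := rfl
    rw [hred]
    gcongr
    · exact hτ.1
    · exact hτ.2
  have hDsum : Summable D := by
    have : D = fun n => M * ((M * t) ^ n / n.factorial) := by
      funext n; rw [hDdef]; rw [mul_pow]; ring
    rw [this]
    exact (Real.summable_pow_div_factorial (M * t)).mul_left M
  have hIocfin : volume (Ioc (0:ℝ) t) < ⊤ := measure_Ioc_lt_top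
  have hIocReal : (volume (Ioc (0:ℝ) t)).toReal = t := by
    rw [Real.volume_Ioc, sub_zero, ENNReal.toReal_ofReal ht.le]
  -- main induction identity
  have cmh : ∀ n, Measurable fun s => convPow φ n (t - s) * h s := fun n =>
    ((cm n).comp (measurable_const.sub measurable_id)).mul hhmeas
  have cmu : ∀ n, Measurable fun s => convPow φ n (t - s) * u s := fun n =>
    ((cm n).comp (measurable_const.sub measurable_id)).mul humeas
  have hts : ∀ s ∈ Ioc (0:ℝ) t, t - s ∈ Icc (0:ℝ) t := by
    intro s hs; exact ⟨by linarith [hs.2], by linarith [hs.1]⟩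
  have intH : ∀ n, IntegrableOn (fun s => convPow φ n (t - s) * h s) (Ioc (0:ℝ) t) := by
    intro n
    apply Measure.integrableOn_of_bounded hIocfin.ne (cmh n).aestronglyMeasurable
      (M := D n * Mh)
    filter_upwards [ae_restrict_mem measurableSet_Ioc] with s hs
    rw [Real.norm_eq_abs, abs_mul]
    exact mul_le_mul (hD n _ (hts s hs)) (hbh s hs) (abs_nonneg _) (hD0 n)
  have intUH : ∀ n, IntegrableOn (fun s => convPow φ n (t - s) * (u s - h s)) (Ioc (0:ℝ) t) := by
    intro n
    apply Measure.integrableOn_of_bounded hIocfin.ne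
      (((cm n).comp (measurable_const.sub measurable_id)).mul
        (humeas.sub hhmeas)).aestronglyMeasurable (M := D n * (Mu + Mh))
    filter_upwards [ae_restrict_mem measurableSet_Ioc] with s hs
    rw [Real.norm_eq_abs]
    show |convPow φ n (t - s) * (u s - h s)| ≤ _
    rw [abs_mul]
    refine mul_le_mul (hD n _ (hts s hs)) ?_ (abs_nonneg _) (hD0 n)
    calc |u s - h s| ≤ |u s| + |h s| := abs_sub _ _
      _ ≤ Mu + Mh := add_le_add (hbu s hs) (hbh s hs)
  have main : ∀ N : ℕ, u t = h t +
      (∑ n ∈ Finset.range N, ∫ s in Ioc (0:ℝ) t, convPow φ n (t - s) * h s) +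
      ∫ s in Ioc (0:ℝ) t, convPow φ N (t - s) * u s := by
    intro N
    induction N with
    | zero =>
      simp only [Finset.range_zero, Finset.sum_empty, add_zero]
      have := heq t ht
      rwa [intervalIntegral.integral_of_le ht.le] at this
    | succ N ihN =>
      have key : (∫ s in Ioc (0:ℝ) t, convPow φ N (t - s) * u s) =
          (∫ s in Ioc (0:ℝ) t, convPow φ N (t - s) * h s) +
          ∫ s in Ioc (0:ℝ) t, convPow φ (N+1) (t - s) * u s := by
        have step1 : (∫ s in Ioc (0:ℝ) t, convPow φ N (t - s) * u s) =
            (∫ s in Ioc (0:ℝ) t, convPow φ N (t - s) * h s) +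
            ∫ s in Ioc (0:ℝ) t, convPow φ N (t - s) * (u s - h s) := by
          rw [← integral_add (intH N) (intUH N)]
          apply setIntegral_congr_fun measurableSet_Ioc
          intro s _
          ring
        have step2 : (∫ s in Ioc (0:ℝ) t, convPow φ N (t - s) * (u s - h s)) =
            ∫ s in Ioc (0:ℝ) t, ∫ r in Ioc (0:ℝ) s,
              convPow φ N (t - s) * φ (s - r) * u r := by
          apply setIntegral_congr_fun measurableSet_Ioc
          intro s hs
          have husm : u s - h s = ∫ r in Ioc (0:ℝ) s, φ (s - r) * u r := by
            have := heq s hs.1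
            rw [intervalIntegral.integral_of_le hs.1.le] at this
            linarith
          show convPow φ N (t - s) * (u s - h s) = _
          rw [husm, ← MeasureTheory.integral_const_mul]
          apply setIntegral_congr_fun measurableSet_Ioc
          intro r _
          ring
        have step3 : (∫ s in Ioc (0:ℝ) t, ∫ r in Ioc (0:ℝ) s,
              convPow φ N (t - s) * φ (s - r) * u r) =
            ∫ r in Ioc (0:ℝ) t, ∫ s in Ioc r t,
              convPow φ N (t - s) * φ (s - r) * u r := by
          apply triangle_swap ht.le (by positivity : (0:ℝ) ≤ D N * M * Mu)
          · exact ((((cm N).comp (measurable_const.sub measurable_fst)).mul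
              (hφmeas.comp (measurable_fst.sub measurable_snd))).mul
              (humeas.comp measurable_snd))
          · intro s r hr hrs hst
            rw [abs_mul, abs_mul]
            refine mul_le_mul (mul_le_mul ?_ ?_ (abs_nonneg _) (hD0 N)) ?_ (abs_nonneg _)
              (by positivity)
            · exact hD N _ ⟨by linarith, by linarith⟩
            · exact hbφ _ ⟨by linarith, by linarith⟩
            · exact hbu r ⟨hr, by linarith⟩
        have step4 : (∫ r in Ioc (0:ℝ) t, ∫ s in Ioc r t,
              convPow φ N (t - s) * φ (s - r) * u r) =
            ∫ r in Ioc (0:ℝ) t, convPow φ (N+1) (t - r) * u r := by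
          apply setIntegral_congr_fun measurableSet_Ioc
          intro r hr
          show (∫ s in Ioc r t, convPow φ N (t - s) * φ (s - r) * u r) = _
          have : (∫ s in Ioc r t, convPow φ N (t - s) * φ (s - r) * u r) =
              (∫ s in Ioc r t, convPow φ N (t - s) * φ (s - r)) * u r := by
            rw [← MeasureTheory.integral_mul_const]
          rw [this, inner_conv φ N hr.2]
        rw [step1, step2, step3, step4]
      rw [ihN, key, Finset.sum_range_succ]
      ring
  -- the partial sums and remainder
  set S : ℕ → ℝ := fun n => ∫ s in Ioc (0:ℝ) t, convPow φ n (t - s) * h s with hSdef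
  have hSbound : ∀ n, ‖S n‖ ≤ D n * Mh * t := by
    intro n
    rw [hSdef]
    calc ‖∫ s in Ioc (0:ℝ) t, convPow φ n (t - s) * h s‖
        ≤ D n * Mh * (volume (Ioc (0:ℝ) t)).toReal := by
          apply norm_setIntegral_le_of_norm_le_const hIocfin
          · intro s hs
            rw [Real.norm_eq_abs, abs_mul]
            exact mul_le_mul (hD n _ (hts s hs)) (hbh s hs) (abs_nonneg _) (hD0 n)
      _ = D n * Mh * t := by rw [hIocReal]
  have hRbound : ∀ n, ‖∫ s in Ioc (0:ℝ) t, convPow φ n (t - s) * u s‖ ≤ D n * Mu * t := by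
    intro n
    calc ‖∫ s in Ioc (0:ℝ) t, convPow φ n (t - s) * u s‖
        ≤ D n * Mu * (volume (Ioc (0:ℝ) t)).toReal := by
          apply norm_setIntegral_le_of_norm_le_const hIocfin
          · intro s hs
            rw [Real.norm_eq_abs, abs_mul]
            exact mul_le_mul (hD n _ (hts s hs)) (hbu s hs) (abs_nonneg _) (hD0 n)
      _ = D n * Mu * t := by rw [hIocReal]
  have hDtend : Tendsto (fun n => D n * Mu * t) atTop (𝓝 0) := by
    have := hDsum.tendsto_atTop_zero
    have h2 := this.mul_const (Mu * t)
    rw [zero_mul] at h2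
    convert h2 using 2 with n
    ring
  have hRtend : Tendsto (fun N => ∫ s in Ioc (0:ℝ) t, convPow φ N (t - s) * u s)
      atTop (𝓝 0) :=
    squeeze_zero_norm hRbound hDtend
  have hSsum : Summable S :=
    Summable.of_norm_bounded ((hDsum.mul_right Mh).mul_right t)
      (by intro n; simpa [mul_assoc] using hSbound n)
  have hpartial : Tendsto (fun N => ∑ n ∈ Finset.range N, S n) atTop (𝓝 (u t - h t)) := by
    have : ∀ N, (∑ n ∈ Finset.range N, S n) =
        u t - h t - ∫ s in Ioc (0:ℝ) t, convPow φ N (t - s) * u s := by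
      intro N; have := main N; linarith
    simp only [this]
    have := (tendsto_const_nhds (x := u t - h t) (f := atTop (α := ℕ))).sub hRtend
    simpa using this
  have htsum : (∑' n, S n) = u t - h t :=
    tendsto_nhds_unique hSsum.hasSum.tendsto_sum_nat hpartial
  -- swap tsum and integral
  have hswap : (∑' n, S n) = ∫ s in Ioc (0:ℝ) t, (∑' n, convPow φ n (t - s)) * h s := by
    have hlint : (∑' n, ∫⁻ s in Ioc (0:ℝ) t, ‖convPow φ n (t - s) * h s‖₊) ≠ ⊤ := by
      apply ne_top_of_le_ne_top (b := ∑' n, ENNReal.ofReal (D n * Mh * t))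
      · rw [← ENNReal.ofReal_tsum_of_nonneg (fun n => by positivity)
          (((hDsum.mul_right Mh).mul_right t).congr (fun n => by ring))]
        exact ENNReal.ofReal_ne_top
      · apply ENNReal.tsum_le_tsum
        intro n
        calc (∫⁻ s in Ioc (0:ℝ) t, ‖convPow φ n (t - s) * h s‖₊)
            ≤ ∫⁻ _ in Ioc (0:ℝ) t, ENNReal.ofReal (D n * Mh) := by
              apply lintegral_mono_ae
              filter_upwards [ae_restrict_mem measurableSet_Ioc] with s hs
              rw [← ENNReal.ofReal_coe_nnreal, coe_nnnorm]
              apply ENNReal.ofReal_le_ofReal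
              rw [Real.norm_eq_abs, abs_mul]
              exact mul_le_mul (hD n _ (hts s hs)) (hbh s hs) (abs_nonneg _) (hD0 n)
          _ = ENNReal.ofReal (D n * Mh) * volume (Ioc (0:ℝ) t) := by
              rw [lintegral_const, Measure.restrict_apply MeasurableSet.univ, univ_inter]
          _ = ENNReal.ofReal (D n * Mh * t) := by
              rw [Real.volume_Ioc, sub_zero, ← ENNReal.ofReal_mul (by positivity)]
    have := MeasureTheory.integral_tsum (μ := volume.restrict (Ioc (0:ℝ) t))
      (f := fun n s => convPow φ n (t - s) * h s)
      (fun n => (cmh n).aestronglyMeasurable.restrict) hlint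
    rw [hSdef, ← this]
    apply setIntegral_congr_fun measurableSet_Ioc
    intro s _
    exact tsum_mul_right
  rw [intervalIntegral.integral_of_le ht.le, ← hswap, htsum]
  ring
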